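/- Let Y be a Hausdorff topological space and let p : Y → ω₁ be a continuous, closed, surjective map onto the space of countable ordinals with its order topology, such that the preimage of every point is compact. Then Y contains an uncountable subset that is discrete in its subspace topology. -/

import Mathlib

open Set

/-- `ω₁` : the space of countable ordinals (ordinals below the first uncountable
ordinal), with the topology inherited from the order topology on `Ordinal`
(which coincides with its order topology). -/
abbrev OmegaOne : Type _ := ↥(Set.Iio (Cardinal.aleph 1).ord)

lemma omegaOne_succ_isOpen (o : OmegaOne) (a : Ordinal) (ha : (o : Ordinal) = a + 1) :
    IsOpen ({o} : Set OmegaOne) := by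
  rw [isOpen_induced_iff]
  refine ⟨Set.Ioo a (a + 1 + 1), isOpen_Ioo, ?_⟩
  ext x
  simp only [Set.mem_preimage, Set.mem_Ioo, Set.mem_singleton_iff]
  constructor
  · rintro ⟨h1, h2⟩
    have h1' : a + 1 ≤ (x : Ordinal) := by
      rwa [Ordinal.add_one_eq_succ, Order.succ_le_iff]
    have h2' : (x : Ordinal) ≤ a + 1 := by
      rw [Ordinal.add_one_eq_succ (a+1), Order.lt_succ_iff] at h2
      exact h2
    exact Subtype.ext (le_antisymm h2' h1' ▸ ha.symm ▸ rfl)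
  · rintro rfl
    rw [ha]
    refine ⟨?_, lt_add_of_pos_right _ one_pos⟩
    rw [Ordinal.add_one_eq_succ]
    exact Order.lt_succ a

lemma omegaOne_uncountable : ¬ (Set.univ : Set OmegaOne).Countable := by
  intro h
  rw [Set.countable_univ_iff] at h
  have h2 : Cardinal.mk ↥(Set.Iio (Cardinal.aleph 1).ord) ≤ Cardinal.aleph0 :=
    Cardinal.mk_le_aleph0
  rw [Ordinal.mk_Iio_ordinal, Cardinal.card_ord,
    Cardinal.lift_le_aleph0] at h2
  exact absurd h2 (not_le.mpr (Cardinal.aleph0_lt_aleph_one))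

theorem perfect_preimage_omegaOne_has_uncountable_discrete
    {Y : Type*} [TopologicalSpace Y] [T2Space Y]
    (p : Y → OmegaOne) (hcont : Continuous p) (hclosed : IsClosedMap p)
    (hsurj : Function.Surjective p) (hfib : ∀ o : OmegaOne, IsCompact (p ⁻¹' {o})) :
    ∃ D : Set Y, ¬ D.Countable ∧ DiscreteTopology ↥D := by
  classical
  -- section of p
  obtain ⟨g, hg⟩ := hsurj.hasRightInverse
  -- set of successor ordinals in ω₁
  set S : Set OmegaOne := {o | ∃ a : Ordinal, (o : Ordinal) = a + 1} with hS
  have hSopen : ∀ o ∈ S, IsOpen ({o} : Set OmegaOne) := by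
    rintro o ⟨a, ha⟩
    exact omegaOne_succ_isOpen o a ha
  -- S is uncountable
  have hSuncount : ¬ S.Countable := by
    intro h
    apply omegaOne_uncountable
    -- map x ↦ x + 1 sends univ into S injectively
    have hlim : ∀ x : OmegaOne, (x : Ordinal) + 1 < (Cardinal.aleph 1).ord := by
      intro x
      rw [Ordinal.add_one_eq_succ]
      exact (Cardinal.isSuccLimit_ord (Cardinal.aleph0_le_aleph 1)).succ_lt x.2
    set f : OmegaOne → OmegaOne := fun x => ⟨(x : Ordinal) + 1, hlim x⟩ with hf
    have hinj : Function.Injective f := by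
      intro x y hxy
      apply Subtype.ext
      have := congrArg (Subtype.val) hxy
      simpa [hf] using this
    have hmaps : Set.MapsTo f Set.univ S := fun x _ => ⟨x, rfl⟩
    have : (f '' Set.univ).Countable := h.mono (Set.mapsTo_iff_image_subset.mp hmaps)
    exact Set.countable_of_injective_of_countable_image (hinj.injOn) this
  refine ⟨g '' S, ?_, ?_⟩
  · intro h
    apply hSuncount
    have hinj : Set.InjOn g S := by
      intro x _ y _ hxy
      have := congrArg p hxy
      rwa [hg x, hg y] at this
    exact Set.countable_of_injective_of_countable_image hinj h
  · rw [discreteTopology_iff_isOpen_singleton]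
    rintro ⟨y, hy⟩
    obtain ⟨o, ho, rfl⟩ := hy
    rw [isOpen_induced_iff]
    refine ⟨p ⁻¹' {o}, (hSopen o ho).preimage hcont, ?_⟩
    ext ⟨z, hz⟩
    obtain ⟨o', ho', rfl⟩ := hz
    simp only [Set.mem_preimage, Set.mem_singleton_iff, hg o', Subtype.mk.injEq]
    constructor
    · rintro rfl; rfl
    · intro h
      have := congrArg p (Subtype.mk.inj h)
      rwa [hg, hg] at this
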